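/- For the Bott–Borel–Weil computation of higher direct images in the second-kind singular case (λ+ρ = [n−1, n−2, …, 1, 0]): every element w = 0d_1⋯d_{n−1} of the relative Hasse diagram (LS words of length n starting with 0) makes w(λ̃+ρ) regular for the Lagrangian parabolic, where λ̃+ρ = [0 | n−1, …, 1]; the number of adjacent transpositions needed to sort the resulting n-tuple (after dropping the bar) into strictly decreasing order equals the number of digits 0 among d_1, …, d_{n−1}; and the sorted result is the weight corresponding to the word d_1⋯d_{n−1}0 in the singular Hasse diagram. -/

import Mathlib

namespace Stmt19

/-- The action of the element of `W^p` with LS word `w` (on `n` coordinates, `true` = digit 1)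
on a coordinate tuple `μ`: the coordinates at positions with digit 1 are deleted, the
remaining coordinates are kept in order, and the negatives of the deleted coordinates are
appended at the end in reverse order. -/
def actWord {n : ℕ} (w : Fin n → Bool) (μ : Fin n → ℤ) : Fin n → ℤ := fun t =>
  if h : t.val < (Finset.univ.filter (fun i => w i = false)).card then
    μ ((Finset.univ.filter (fun i => w i = false)).orderEmbOfFin rfl ⟨t.val, h⟩)
  else
    -μ ((Finset.univ.filter (fun i => w i = true)).orderEmbOfFin rfl
        (Fin.rev ⟨t.val - (Finset.univ.filter (fun i => w i = false)).card, by
          have h1 := Finset.card_filter_add_card_filter_not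
            (s := (Finset.univ : Finset (Fin n))) (p := fun i => w i = false)
          simp only [Bool.not_eq_false, Finset.card_univ, Fintype.card_fin] at h1
          have h2 := t.isLt
          omega⟩))

variable {n : ℕ}

def kF (w : Fin n → Bool) : ℕ := (Finset.univ.filter (fun i => w i = false)).card
def kT (w : Fin n → Bool) : ℕ := (Finset.univ.filter (fun i => w i = true)).card

noncomputable def eF (w : Fin n → Bool) : Fin (kF w) ↪o Fin n :=
  (Finset.univ.filter (fun i => w i = false)).orderEmbOfFin rfl
noncomputable def eT (w : Fin n → Bool) : Fin (kT w) ↪o Fin n :=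
  (Finset.univ.filter (fun i => w i = true)).orderEmbOfFin rfl

lemma kF_add_kT (w : Fin n → Bool) : kF w + kT w = n := by
  have h1 := Finset.card_filter_add_card_filter_not
    (s := (Finset.univ : Finset (Fin n))) (p := fun i => w i = false)
  simp only [Bool.not_eq_false, Finset.card_univ, Fintype.card_fin] at h1
  simpa [kF, kT] using h1

lemma actWord_of_lt (w : Fin n → Bool) (μ : Fin n → ℤ) (t : Fin n) (h : t.val < kF w) :
    actWord w μ t = μ (eF w ⟨t.val, h⟩) := dif_pos h

lemma actWord_of_ge (w : Fin n → Bool) (μ : Fin n → ℤ) (t : Fin n) (h : ¬ t.val < kF w) :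
    actWord w μ t = -μ (eT w (Fin.rev ⟨t.val - kF w, by
      have := kF_add_kT w; have := t.isLt; omega⟩)) := dif_neg h

lemma eF_mem (w : Fin n → Bool) (j : Fin (kF w)) : w (eF w j) = false := by
  have := Finset.orderEmbOfFin_mem (Finset.univ.filter (fun i => w i = false)) rfl j
  rw [Finset.mem_filter] at this
  exact this.2

lemma eT_mem (w : Fin n → Bool) (j : Fin (kT w)) : w (eT w j) = true := by
  have := Finset.orderEmbOfFin_mem (Finset.univ.filter (fun i => w i = true)) rfl j
  rw [Finset.mem_filter] at this
  exact this.2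

lemma eF_surj (w : Fin n → Bool) (x : Fin n) (hx : w x = false) : ∃ j, eF w j = x := by
  have hx' : x ∈ (↑(Finset.univ.filter (fun i => w i = false)) : Set (Fin n)) := by simp [hx]
  rw [← Finset.range_orderEmbOfFin _ rfl] at hx'
  exact hx'

lemma eT_surj (w : Fin n → Bool) (x : Fin n) (hx : w x = true) : ∃ j, eT w j = x := by
  have hx' : x ∈ (↑(Finset.univ.filter (fun i => w i = true)) : Set (Fin n)) := by simp [hx]
  rw [← Finset.range_orderEmbOfFin _ rfl] at hx'
  exact hx'

/-- Bott–Borel–Weil in the second-kind singular case, `λ + ρ = [n-1, …, 1, 0]` and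
`λ̃ + ρ = [0 | n-1, …, 1]`.  Every element `w = 0d_1⋯d_{n-1}` of the relative Hasse diagram
makes `w(λ̃+ρ)` regular for the Lagrangian parabolic (all coordinates distinct); the number
of adjacent transpositions needed to sort the resulting tuple into strictly decreasing
order (its number of inversions) equals the number of digits `0` among `d_1, …, d_{n-1}`;
and the sorted result is the weight attached to the word `d_1⋯d_{n-1}0` of the singular
Hasse diagram, i.e. `(d_1⋯d_{n-1}0)(λ+ρ)`. -/
theorem bott_borel_weil_second_kind (n : ℕ) (hn : 1 ≤ n) (d : Fin n → Bool)
    (hd : d ⟨0, by omega⟩ = false)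
    (μt : Fin n → ℤ) (hμt : ∀ t : Fin n, μt t = if t.val = 0 then 0 else (n : ℤ) - t.val)
    (μ : Fin n → ℤ) (hμ : ∀ t : Fin n, μ t = (n : ℤ) - 1 - t.val)
    (d' : Fin n → Bool)
    (hd' : ∀ t : Fin n, d' t = if h : t.val + 1 < n then d ⟨t.val + 1, h⟩ else false) :
    Function.Injective (actWord d μt) ∧
    (Finset.univ.filter (fun p : Fin n × Fin n =>
        p.1 < p.2 ∧ actWord d μt p.1 < actWord d μt p.2)).card
      = (Finset.univ.filter (fun t : Fin n => 1 ≤ t.val ∧ d t = false)).card ∧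
    StrictAnti (actWord d' μ) ∧
    ∃ σ : Equiv.Perm (Fin n), actWord d' μ = actWord d μt ∘ σ := by
  classical
  -- basic facts about μt and μ
  have hμt0 : ∀ x : Fin n, 0 ≤ μt x := by
    intro x; rw [hμt x]; have := x.isLt; split <;> omega
  have hμtpos : ∀ x : Fin n, x.val ≠ 0 → 0 < μt x := by
    intro x hx; rw [hμt x]; have := x.isLt; split <;> omega
  have hμt_inj : Function.Injective μt := by
    intro a b hab
    rw [hμt a, hμt b] at hab
    have ha := a.isLt; have hb := b.isLt
    apply Fin.ext
    split_ifs at hab <;> omega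
  have hμt_anti : ∀ x y : Fin n, 1 ≤ x.val → x < y → μt y < μt x := by
    intro x y hx hxy
    rw [hμt x, hμt y]
    rw [Fin.lt_def] at hxy
    have := y.isLt
    split_ifs <;> omega
  have hμ_anti : ∀ x y : Fin n, x < y → μ y < μ x := by
    intro x y h; rw [hμ x, hμ y]; rw [Fin.lt_def] at h; omega
  have hμ_nonneg : ∀ x : Fin n, 0 ≤ μ x := by
    intro x; rw [hμ x]; have := x.isLt; omega
  -- facts about d
  have hk1 : 0 < kF d := Finset.card_pos.mpr ⟨⟨0, by omega⟩,
    by simp only [Finset.mem_filter, Finset.mem_univ, true_and]; exact hd⟩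
  have hkn : kF d ≤ n := by have := kF_add_kT d; omega
  have heF0 : (eF d ⟨0, hk1⟩).val = 0 := by
    obtain ⟨j, hj⟩ := eF_surj d ⟨0, by omega⟩ hd
    have h1 : eF d ⟨0, hk1⟩ ≤ eF d j := (eF d).monotone (by simp [Fin.le_def])
    rw [hj, Fin.le_def] at h1
    exact Nat.le_antisymm h1 (Nat.zero_le _)
  have heFpos : ∀ j : Fin (kF d), 0 < j.val → 0 < (eF d j).val := by
    intro j hj
    have h1 := (eF d).strictMono (show (⟨0, hk1⟩ : Fin (kF d)) < j by
      rw [Fin.lt_def]; exact hj)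
    rw [Fin.lt_def, heF0] at h1
    exact h1
  have heTpos : ∀ j : Fin (kT d), 0 < (eT d j).val := by
    intro j
    rcases Nat.eq_zero_or_pos (eT d j).val with h | h
    · exfalso
      have h1 := eT_mem d j
      have h2 : eT d j = ⟨0, by omega⟩ := Fin.ext h
      rw [h2, hd] at h1
      simp at h1
    · exact h
  -- sign facts for actWord d μt
  have hgpos : ∀ t : Fin n, (h : t.val < kF d) → 0 ≤ actWord d μt t := by
    intro t h
    rw [actWord_of_lt d μt t h]
    exact hμt0 _
  have hgneg : ∀ t : Fin n, (h : ¬ t.val < kF d) → actWord d μt t < 0 := by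
    intro t h
    rw [actWord_of_ge d μt t h]
    exact neg_lt_zero.mpr (hμtpos _ (Nat.pos_iff_ne_zero.mp (heTpos _)))
  have hgpos' : ∀ t : Fin n, 0 < t.val → (h : t.val < kF d) → 0 < actWord d μt t := by
    intro t ht h
    rw [actWord_of_lt d μt t h]
    exact hμtpos _ (Nat.pos_iff_ne_zero.mp (heFpos ⟨t.val, h⟩ ht))
  have hg0 : ∀ t : Fin n, t.val = 0 → actWord d μt t = 0 := by
    intro t ht
    have h : t.val < kF d := by omega
    have hv : (eF d ⟨t.val, h⟩).val = 0 := by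
      rw [show (⟨t.val, h⟩ : Fin (kF d)) = ⟨0, hk1⟩ from Fin.ext ht]
      exact heF0
    rw [actWord_of_lt d μt t h, hμt, if_pos hv]
  -- second block is strictly antitone
  have hganti2 : ∀ a b : Fin n, ¬ a.val < kF d → a < b →
      actWord d μt b < actWord d μt a := by
    intro a b ha hab
    have hb : ¬ b.val < kF d := by rw [Fin.lt_def] at hab; omega
    rw [actWord_of_ge d μt a ha, actWord_of_ge d μt b hb]
    have hlt : ∀ (p : b.val - kF d < kT d) (q : a.val - kF d < kT d),
        Fin.rev (⟨b.val - kF d, p⟩ : Fin (kT d)) < Fin.rev (⟨a.val - kF d, q⟩ : Fin (kT d)) := by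
      intro p q
      rw [Fin.rev_lt_rev, Fin.lt_def]
      rw [Fin.lt_def] at hab
      simp only
      omega
    exact neg_lt_neg (hμt_anti _ _ (heTpos _) ((eT d).strictMono (hlt _ _)))
  -- Part 1 : injectivity
  have hinj : Function.Injective (actWord d μt) := by
    intro a b hab
    by_cases ha : a.val < kF d <;> by_cases hb : b.val < kF d
    · rw [actWord_of_lt d μt a ha, actWord_of_lt d μt b hb] at hab
      have h1 := (eF d).injective (hμt_inj hab)
      apply Fin.ext
      simpa [Fin.ext_iff] using h1
    · exfalso
      have h1 := hgpos a ha
      have h2 := hgneg b hb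
      omega
    · exfalso
      have h1 := hgneg a ha
      have h2 := hgpos b hb
      omega
    · rw [actWord_of_ge d μt a ha, actWord_of_ge d μt b hb] at hab
      have h1 := hμt_inj (neg_injective hab)
      have h2 := Fin.rev_injective ((eT d).injective h1)
      apply Fin.ext
      rw [Fin.ext_iff] at h2
      have h3 : a.val - kF d = b.val - kF d := h2
      omega
  -- Part 2 : inversion count
  have hRHS : (Finset.univ.filter (fun t : Fin n => 1 ≤ t.val ∧ d t = false)).card
      = kF d - 1 := by
    have hseteq : (Finset.univ.filter (fun t : Fin n => 1 ≤ t.val ∧ d t = false))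
        = (Finset.univ.filter (fun i => d i = false)).erase ⟨0, by omega⟩ := by
      ext x
      simp only [Finset.mem_filter, Finset.mem_univ, true_and, Finset.mem_erase, ne_eq,
        Fin.ext_iff]
      constructor
      · rintro ⟨h1, h2⟩; exact ⟨by omega, h2⟩
      · rintro ⟨h1, h2⟩; exact ⟨by omega, h2⟩
    rw [hseteq, Finset.card_erase_of_mem
      (by simp only [Finset.mem_filter, Finset.mem_univ, true_and]; exact hd)]
    rfl
  have hcard_lt : (Finset.univ.filter (fun t : Fin n => t.val < kF d)).card = kF d := by
    have himg : (Finset.univ.filter (fun t : Fin n => t.val < kF d))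
        = Finset.image (fun j : Fin (kF d) => (⟨j.val, by omega⟩ : Fin n)) Finset.univ := by
      ext x
      simp only [Finset.mem_filter, Finset.mem_univ, true_and, Finset.mem_image, Fin.ext_iff]
      constructor
      · intro h; exact ⟨⟨x.val, h⟩, by simp⟩
      · rintro ⟨j, hj⟩
        have hj' : j.val = x.val := hj
        have := j.isLt
        omega
    rw [himg, Finset.card_image_of_injective _
      (fun a b hab => Fin.ext (by simpa [Fin.ext_iff] using hab))]
    simp
  have hLHS : (Finset.univ.filter (fun p : Fin n × Fin n =>
        p.1 < p.2 ∧ actWord d μt p.1 < actWord d μt p.2))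
      = Finset.image (fun t : Fin n => ((⟨0, by omega⟩ : Fin n), t))
          (Finset.univ.filter (fun t : Fin n => 1 ≤ t.val ∧ t.val < kF d)) := by
    ext p
    simp only [Finset.mem_filter, Finset.mem_univ, true_and, Finset.mem_image]
    constructor
    · rintro ⟨h1, h2⟩
      have hp2 : p.2.val < kF d := by
        by_contra hcon
        by_cases hp1 : p.1.val < kF d
        · have ha := hgpos p.1 hp1
          have hb := hgneg p.2 hcon
          omega
        · have := hganti2 p.1 p.2 hp1 h1
          omega
      have hp1 : p.1.val < kF d := by rw [Fin.lt_def] at h1; omega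
      have hzero : p.1.val = 0 := by
        by_contra h0
        have hmono : eF d ⟨p.1.val, hp1⟩ < eF d ⟨p.2.val, hp2⟩ :=
          (eF d).strictMono (by rw [Fin.lt_def] at h1 ⊢; exact h1)
        have hkey := hμt_anti _ _ (heFpos ⟨p.1.val, hp1⟩ (show 0 < p.1.val by omega)) hmono
        rw [actWord_of_lt d μt p.1 hp1, actWord_of_lt d μt p.2 hp2] at h2
        omega
      refine ⟨p.2, ⟨by rw [Fin.lt_def] at h1; omega, hp2⟩, ?_⟩
      have hfst : (⟨0, by omega⟩ : Fin n) = p.1 := Fin.ext (by simp only; omega)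
      rw [hfst]
    · rintro ⟨t, ⟨ht1, ht2⟩, rfl⟩
      constructor
      · rw [Fin.lt_def]
        simp only
        omega
      · rw [hg0 ⟨0, by omega⟩ rfl]
        exact hgpos' t (by omega) ht2
  have part2 : (Finset.univ.filter (fun p : Fin n × Fin n =>
        p.1 < p.2 ∧ actWord d μt p.1 < actWord d μt p.2)).card
      = (Finset.univ.filter (fun t : Fin n => 1 ≤ t.val ∧ d t = false)).card := by
    rw [hLHS, Finset.card_image_of_injective _
      (fun a b hab => by simpa using hab), hRHS]
    have hseteq : (Finset.univ.filter (fun t : Fin n => 1 ≤ t.val ∧ t.val < kF d))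
        = (Finset.univ.filter (fun t : Fin n => t.val < kF d)).erase ⟨0, by omega⟩ := by
      ext x
      simp only [Finset.mem_filter, Finset.mem_univ, true_and, Finset.mem_erase, ne_eq,
        Fin.ext_iff]
      constructor
      · rintro ⟨h1, h2⟩; exact ⟨by omega, h2⟩
      · rintro ⟨h1, h2⟩; exact ⟨by omega, h2⟩
    rw [hseteq, Finset.card_erase_of_mem
      (by simp only [Finset.mem_filter, Finset.mem_univ, true_and]; exact hk1), hcard_lt]
  -- facts about d'
  have hd'last : d' ⟨n - 1, by omega⟩ = false := by
    rw [hd' ⟨n - 1, by omega⟩, dif_neg (show ¬ (n - 1 + 1 < n) by omega)]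
  have hk1' : 0 < kF d' := Finset.card_pos.mpr ⟨⟨n - 1, by omega⟩,
    by simp only [Finset.mem_filter, Finset.mem_univ, true_and]; exact hd'last⟩
  have he'Tlt : ∀ j : Fin (kT d'), (eT d' j).val < n - 1 := by
    intro j
    have h1 := eT_mem d' j
    by_contra hcon
    have hval : (eT d' j).val = n - 1 := by have := (eT d' j).isLt; omega
    have h2 : eT d' j = ⟨n - 1, by omega⟩ := Fin.ext hval
    rw [h2, hd'last] at h1
    simp at h1
  have hμ_posT : ∀ j : Fin (kT d'), 0 < μ (eT d' j) := by
    intro j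
    rw [hμ]
    have h1 := he'Tlt j
    have h2 := (eT d' j).isLt
    omega
  -- Part 3 : strict antitonicity
  have hanti : StrictAnti (actWord d' μ) := by
    intro a b hab
    by_cases hb : b.val < kF d'
    · have ha : a.val < kF d' := by rw [Fin.lt_def] at hab; omega
      rw [actWord_of_lt d' μ a ha, actWord_of_lt d' μ b hb]
      exact hμ_anti _ _ ((eF d').strictMono (by rw [Fin.lt_def] at hab ⊢; exact hab))
    · by_cases ha : a.val < kF d'
      · rw [actWord_of_lt d' μ a ha, actWord_of_ge d' μ b hb]
        have key : ∀ (j : Fin (kT d')) (x : Fin (kF d')), -μ (eT d' j) < μ (eF d' x) := by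
          intro j x
          have h1 := hμ_posT j
          have h2 := hμ_nonneg (eF d' x)
          omega
        exact key _ _
      · rw [actWord_of_ge d' μ a ha, actWord_of_ge d' μ b hb]
        have hlt : ∀ (p : b.val - kF d' < kT d') (q : a.val - kF d' < kT d'),
            Fin.rev (⟨b.val - kF d', p⟩ : Fin (kT d'))
              < Fin.rev (⟨a.val - kF d', q⟩ : Fin (kT d')) := by
          intro p q
          rw [Fin.rev_lt_rev, Fin.lt_def]
          rw [Fin.lt_def] at hab
          simp only
          omega
        exact neg_lt_neg (hμ_anti _ _ ((eT d').strictMono (hlt _ _)))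
  -- Part 4 : existence of σ
  have hsub : ∀ a : Fin n, ∃ b : Fin n, actWord d μt b = actWord d' μ a := by
    intro a
    by_cases ha : a.val < kF d'
    · rw [actWord_of_lt d' μ a ha]
      set x := eF d' ⟨a.val, ha⟩ with hx
      by_cases hx1 : x.val + 1 < n
      · have hdx : d ⟨x.val + 1, hx1⟩ = false := by
          have h1 := eF_mem d' ⟨a.val, ha⟩
          rw [← hx] at h1
          rw [hd' x, dif_pos hx1] at h1
          exact h1
        obtain ⟨j, hj⟩ := eF_surj d _ hdx
        refine ⟨⟨j.val, by omega⟩, ?_⟩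
        have hjlt : (⟨j.val, by omega⟩ : Fin n).val < kF d := j.isLt
        rw [actWord_of_lt d μt _ hjlt]
        have hmk : (⟨(⟨j.val, by omega⟩ : Fin n).val, hjlt⟩ : Fin (kF d)) = j := Fin.ext rfl
        rw [hmk, hj, hμt, hμ]
        rw [if_neg (show ¬ (x.val + 1 = 0) by omega)]
        show (n : ℤ) - ((x.val + 1 : ℕ) : ℤ) = (n : ℤ) - 1 - (x.val : ℤ)
        push_cast
        ring
      · have hxval : x.val = n - 1 := by have := x.isLt; omega
        refine ⟨⟨0, by omega⟩, ?_⟩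
        rw [hg0 ⟨0, by omega⟩ rfl, hμ]
        omega
    · rw [actWord_of_ge d' μ a ha]
      have key : ∀ jj : Fin (kT d'), ∃ b : Fin n, actWord d μt b = -μ (eT d' jj) := by
        intro jj
        set y := eT d' jj with hy
        have h1 := eT_mem d' jj
        rw [← hy] at h1
        have hylt : y.val < n - 1 := he'Tlt jj
        have hy1 : y.val + 1 < n := by omega
        have hdy : d ⟨y.val + 1, hy1⟩ = true := by
          rw [hd' y, dif_pos hy1] at h1
          exact h1
        obtain ⟨j, hj⟩ := eT_surj d _ hdy
        refine ⟨⟨kF d + (Fin.rev j).val,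
          by have := kF_add_kT d; have := (Fin.rev j).isLt; omega⟩, ?_⟩
        have hge : ¬ (⟨kF d + (Fin.rev j).val,
            by have := kF_add_kT d; have := (Fin.rev j).isLt; omega⟩ : Fin n).val < kF d :=
          (by omega : ¬ (kF d + (Fin.rev j).val < kF d))
        rw [actWord_of_ge d μt _ hge]
        have hidx : ∀ (p : (⟨kF d + (Fin.rev j).val,
            by have := kF_add_kT d; have := (Fin.rev j).isLt; omega⟩ : Fin n).val - kF d < kT d),
            (⟨(⟨kF d + (Fin.rev j).val,
              by have := kF_add_kT d; have := (Fin.rev j).isLt; omega⟩ : Fin n).val - kF d, p⟩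
              : Fin (kT d)) = Fin.rev j := by
          intro p
          apply Fin.ext
          show kF d + (Fin.rev j).val - kF d = (Fin.rev j).val
          omega
        rw [hidx, Fin.rev_rev, hj, hμt, hμ]
        rw [if_neg (show ¬ (y.val + 1 = 0) by omega)]
        show -((n : ℤ) - ((y.val + 1 : ℕ) : ℤ)) = -((n : ℤ) - 1 - (y.val : ℤ))
        push_cast
        ring
      exact key _
  have hf_inj : Function.Injective (actWord d' μ) := hanti.injective
  have himg : Finset.image (actWord d' μ) Finset.univ
      = Finset.image (actWord d μt) Finset.univ := by
    apply Finset.eq_of_subset_of_card_le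
    · intro z hz
      simp only [Finset.mem_image, Finset.mem_univ, true_and] at hz ⊢
      obtain ⟨a, rfl⟩ := hz
      obtain ⟨b, hb⟩ := hsub a
      exact ⟨b, hb⟩
    · rw [Finset.card_image_of_injective _ hinj, Finset.card_image_of_injective _ hf_inj]
  have hrange : Set.range (actWord d' μ) = Set.range (actWord d μt) := by
    have h1 : Set.range (actWord d' μ) = ↑(Finset.image (actWord d' μ) Finset.univ) := by
      ext z; simp
    have h2 : Set.range (actWord d μt) = ↑(Finset.image (actWord d μt) Finset.univ) := by
      ext z; simp
    rw [h1, h2, himg]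
  refine ⟨hinj, part2, hanti, ?_⟩
  refine ⟨(Equiv.ofInjective _ hf_inj).trans
    ((Equiv.setCongr hrange).trans (Equiv.ofInjective _ hinj).symm), ?_⟩
  funext x
  simp only [Function.comp_apply, Equiv.trans_apply]
  rw [Equiv.apply_ofInjective_symm hinj]
  rfl


end Stmt19
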